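/- arXiv:0903.3481 — 2 statements merged into one kernel-verified Lean document; each statement's English description precedes it below -/
import Mathlib

section
/- Let p be a prime and T a free Z[ζ_p]-module of rank m, viewed as a Z-lattice with the property that pT* ⊂ T where T* is the dual lattice (T is p-elementary with discriminant group (Z/p)^a). If the isometry σ (multiplication by ζ_p) acts trivially on T*/T, then a ≤ m. -/
/-- Let `T ⊂ T*` be lattices in a rational vector space `V`, with `T` a free
`ℤ[ζ_p]`-module of rank `m` via an isometry `σ` (encoded by the action of `σ` on a
`ℤ`-basis of `T` indexed by `Fin m × Fin (p-1)`), with `p T* ⊆ T` (so the discriminant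
group `T*/T` is `p`-elementary, say isomorphic to `(ℤ/p)^a`). If `σ` acts trivially on
`T*/T`, then `a ≤ m`. -/
theorem discriminant_generators_bound (p m a : ℕ) (hp : p.Prime)
    (V : Type*) [AddCommGroup V] [Module ℚ V]
    (T Tstar : Submodule ℤ V) (hTT : T ≤ Tstar)
    (σ : V →ₗ[ℚ] V)
    (hσT : ∀ x ∈ T, σ x ∈ T) (hσTs : ∀ x ∈ Tstar, σ x ∈ Tstar)
    (b : Module.Basis (Fin m × Fin (p - 1)) ℤ T)
    (hb : ∀ (i : Fin m) (j : Fin (p - 1)),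
      σ (b (i, j) : V) =
        if h : (j : ℕ) + 1 < p - 1 then (b (i, ⟨(j : ℕ) + 1, h⟩) : V)
        else -∑ l : Fin (p - 1), (b (i, l) : V))
    (hpTs : ∀ x ∈ Tstar, (p : ℚ) • x ∈ T)
    (htriv : ∀ x ∈ Tstar, σ x - x ∈ T)
    (e : (Tstar ⧸ T.comap Tstar.subtype) ≃ₗ[ℤ] (Fin a → ZMod p)) :
    a ≤ m := by
  classical
  haveI : Fact p.Prime := ⟨hp⟩
  have hp2 : 2 ≤ p := hp.two_le
  have hlt : p - 2 < p - 1 := by omega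
  have h0lt : 0 < p - 1 := by omega
  set last : Fin (p - 1) := ⟨p - 2, hlt⟩ with hlast_def
  have hy : ∀ x : Tstar, (p : ℚ) • (x : V) ∈ T := fun x => hpTs x x.2
  set y : Tstar → T := fun x => ⟨(p : ℚ) • (x : V), hy x⟩ with hy_def
  set c : Tstar → ((Fin m × Fin (p - 1)) →₀ ℤ) := fun x => b.repr (y x) with hc_def
  set w : Fin m × Fin (p - 1) → T := fun k =>
    if h : (k.2 : ℕ) + 1 < p - 1 then b (k.1, ⟨(k.2 : ℕ) + 1, h⟩) else -∑ l, b (k.1, l)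
    with hw_def
  have hw : ∀ k : Fin m × Fin (p - 1), ((w k : V)) = σ (b k : V) := by
    rintro ⟨i, j⟩
    rw [hb]
    by_cases h : (j : ℕ) + 1 < p - 1
    · simp [hw_def, h]
    · simp [hw_def, h]
  have hrep : ∀ (i : Fin m) (j : Fin (p - 1)) (k₀ : Fin m × Fin (p - 1)),
      b.repr (w (i, j)) k₀ =
        if h : (j : ℕ) + 1 < p - 1 then
          (if ((i, ⟨(j : ℕ) + 1, h⟩) : Fin m × Fin (p - 1)) = k₀ then 1 else 0)
        else (if i = k₀.1 then -1 else 0) := by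
    intro i j k₀
    by_cases h : (j : ℕ) + 1 < p - 1
    · simp [hw_def, h, Module.Basis.repr_self, Finsupp.single_apply]
    · obtain ⟨i₀, j₀⟩ := k₀
      simp only [hw_def, dif_neg h, map_neg, map_sum, Module.Basis.repr_self, Finsupp.neg_apply,
        Finsupp.finset_sum_apply, Finsupp.single_apply, Prod.mk.injEq]
      by_cases hi : i = i₀
      · simp [hi]
      · simp [hi]
  -- main coordinate identity for each x ∈ Tstar
  have hmain : ∀ (x : Tstar) (k₀ : Fin m × Fin (p - 1)), ∃ r : ℤ,
      (∑ k : Fin m × Fin (p - 1), c x k * b.repr (w k) k₀) = c x k₀ + p * r := by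
    intro x k₀
    have hσx : σ (x : V) - (x : V) ∈ T := htriv x x.2
    set t : T := ⟨σ (x : V) - (x : V), hσx⟩ with ht_def
    have hsV : σ ((y x : V)) ∈ T := hσT _ (y x).2
    set s : T := ⟨σ ((y x : V)), hsV⟩ with hs_def
    have hs1 : s = y x + (p : ℤ) • t := by
      apply Subtype.ext
      show σ ((p : ℚ) • (x : V)) = (p : ℚ) • (x : V) + (p : ℤ) • (σ (x : V) - (x : V))
      rw [← Int.cast_smul_eq_zsmul ℚ, map_smul]
      push_cast
      rw [smul_sub]
      abel
    have hs2 : s = ∑ k : Fin m × Fin (p - 1), c x k • w k := by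
      apply Subtype.ext
      show σ ((y x : V)) = _
      have h1 : ((y x : V)) = ∑ k : Fin m × Fin (p - 1), c x k • (b k : V) := by
        conv_lhs => rw [← b.sum_repr (y x)]
        push_cast
        rfl
      rw [h1, map_sum]
      have h2 : ((∑ k : Fin m × Fin (p - 1), c x k • w k : T) : V)
          = ∑ k : Fin m × Fin (p - 1), c x k • ((w k) : V) := by
        push_cast
        rfl
      rw [h2]
      refine Finset.sum_congr rfl fun k _ => ?_
      rw [hw k, map_zsmul]
    have hs3 : b.repr s k₀ = c x k₀ + p * (b.repr t k₀) := by
      rw [hs1, map_add, map_smul]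
      simp [hc_def, mul_comm]
    refine ⟨b.repr t k₀, ?_⟩
    rw [← hs3, hs2, map_sum]
    rw [Finsupp.finset_sum_apply]
    refine Finset.sum_congr rfl fun k _ => ?_
    rw [map_smul]
    simp [smul_eq_mul]
  -- identity B : base case
  have hB : ∀ (x : Tstar) (i₀ : Fin m), ∃ r : ℤ,
      -(c x (i₀, last)) = c x (i₀, ⟨0, h0lt⟩) + p * r := by
    intro x i₀
    obtain ⟨r, hr⟩ := hmain x (i₀, ⟨0, h0lt⟩)
    refine ⟨r, ?_⟩
    rw [← hr]
    have : ∀ k : Fin m × Fin (p - 1),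
        c x k * b.repr (w k) (i₀, ⟨0, h0lt⟩) = if k = (i₀, last) then -(c x k) else 0 := by
      rintro ⟨i, j⟩
      rw [hrep]
      by_cases h : (j : ℕ) + 1 < p - 1
      · rw [dif_pos h]
        have h1 : ((i, ⟨(j : ℕ) + 1, h⟩) : Fin m × Fin (p - 1)) ≠ (i₀, ⟨0, h0lt⟩) := by
          intro hcon
          have := congrArg (fun q => (q.2 : ℕ)) hcon
          simp at this
        have h2 : ((i, j) : Fin m × Fin (p - 1)) ≠ (i₀, last) := by
          intro hcon
          have := congrArg (fun q => (q.2 : ℕ)) hcon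
          simp [hlast_def] at this
          omega
        simp [h1, h2]
      · rw [dif_neg h]
        have hj : j = last := by
          apply Fin.ext
          have := j.2
          simp [hlast_def]
          omega
        subst hj
        by_cases hi : i = i₀
        · simp [hi]
        · simp [hi, Prod.ext_iff]
    rw [Finset.sum_congr rfl fun k _ => this k]
    simp
  -- identity A : inductive step
  have hA : ∀ (x : Tstar) (i₀ : Fin m) (jv : ℕ) (h : jv + 1 < p - 1), ∃ r : ℤ,
      c x (i₀, ⟨jv, by omega⟩) - c x (i₀, last)
        = c x (i₀, ⟨jv + 1, h⟩) + p * r := by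
    intro x i₀ jv h
    obtain ⟨r, hr⟩ := hmain x (i₀, ⟨jv + 1, h⟩)
    refine ⟨r, ?_⟩
    rw [← hr]
    have : ∀ k : Fin m × Fin (p - 1),
        c x k * b.repr (w k) (i₀, ⟨jv + 1, h⟩)
          = (if k = (i₀, ⟨jv, by omega⟩) then c x k else 0)
            + (if k = (i₀, last) then -(c x k) else 0) := by
      rintro ⟨i, j⟩
      rw [hrep]
      by_cases h' : (j : ℕ) + 1 < p - 1
      · rw [dif_pos h']
        have h2 : ((i, j) : Fin m × Fin (p - 1)) ≠ (i₀, last) := by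
          intro hcon
          have := congrArg (fun q => (q.2 : ℕ)) hcon
          simp [hlast_def] at this
          omega
        by_cases h1 : ((i, ⟨(j : ℕ) + 1, h'⟩) : Fin m × Fin (p - 1)) = (i₀, ⟨jv + 1, h⟩)
        · have h3 : ((i, j) : Fin m × Fin (p - 1)) = (i₀, ⟨jv, by omega⟩) := by
            obtain ⟨ha, hb'⟩ := Prod.mk.injEq .. ▸ h1
            have : (j : ℕ) = jv := by
              have := congrArg Fin.val hb'
              simpa using this
            exact Prod.ext ha (Fin.ext this)
          have hjl : ((⟨jv, by omega⟩ : Fin (p - 1))) ≠ last := by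
            simp only [hlast_def, ne_eq, Fin.mk.injEq]
            omega
          simp [h1, h2, h3, hjl]
        · have h3 : ((i, j) : Fin m × Fin (p - 1)) ≠ (i₀, ⟨jv, by omega⟩) := by
            intro hcon
            apply h1
            obtain ⟨ha, hb'⟩ := Prod.mk.injEq .. ▸ hcon
            have : (j : ℕ) = jv := congrArg Fin.val hb'
            exact Prod.ext ha (Fin.ext (by simp [this]))
          simp [h1, h2, h3]
      · rw [dif_neg h']
        have hj : j = last := by
          apply Fin.ext
          have := j.2
          simp [hlast_def]
          omega
        subst hj
        have h3 : ((i, last) : Fin m × Fin (p - 1)) ≠ (i₀, ⟨jv, by omega⟩) := by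
          intro hcon
          have := congrArg (fun q => (q.2 : ℕ)) hcon
          simp [hlast_def] at this
          omega
        have hjl : ((⟨jv, by omega⟩ : Fin (p - 1))) ≠ last := by
          simp only [hlast_def, ne_eq, Fin.mk.injEq]
          omega
        by_cases hi : i = i₀
        · simp [hi, h3, hjl, hjl.symm]
        · simp [hi, h3, Prod.ext_iff]
    rw [Finset.sum_congr rfl fun k _ => this k, Finset.sum_add_distrib]
    simp [sub_eq_add_neg]
  -- mod p recurrence solved
  have hkey : ∀ (x : Tstar) (i : Fin m) (jv : ℕ) (hjv : jv < p - 1),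
      ((c x (i, ⟨jv, hjv⟩) : ℤ) : ZMod p)
        = -((jv : ZMod p) + 1) * ((c x (i, last) : ℤ) : ZMod p) := by
    intro x i jv
    induction jv with
    | zero =>
      intro hjv
      obtain ⟨r, hr⟩ := hB x i
      have := congrArg (fun z : ℤ => (z : ZMod p)) hr
      push_cast at this
      simp [ZMod.natCast_self] at this
      rw [← this]
      ring
    | succ jv ih =>
      intro hjv
      obtain ⟨r, hr⟩ := hA x i jv hjv
      have := congrArg (fun z : ℤ => (z : ZMod p)) hr
      push_cast at this
      simp [ZMod.natCast_self] at this
      rw [← this, ih (by omega)]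
      push_cast
      ring
  -- zero coordinates => in T
  have hinT : ∀ x : Tstar, (∀ i : Fin m, ((c x (i, last) : ℤ) : ZMod p) = 0) → (x : V) ∈ T := by
    intro x hx0
    have hall : ∀ k : Fin m × Fin (p - 1), (p : ℤ) ∣ c x k := by
      rintro ⟨i, j⟩
      have h1 : ((c x (i, j) : ℤ) : ZMod p) = 0 := by
        have := hkey x i (j : ℕ) j.2
        have hj : (⟨(j : ℕ), j.2⟩ : Fin (p - 1)) = j := by apply Fin.ext; rfl
        rw [hj] at this
        rw [this, hx0 i, mul_zero]
      exact (ZMod.intCast_zmod_eq_zero_iff_dvd _ _).mp h1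
    set z : T := ∑ k : Fin m × Fin (p - 1), (c x k / (p : ℤ)) • b k with hz_def
    have hyz : y x = (p : ℤ) • z := by
      rw [hz_def, Finset.smul_sum]
      conv_lhs => rw [← b.sum_repr (y x)]
      refine Finset.sum_congr rfl fun k _ => ?_
      rw [smul_smul, Int.mul_ediv_cancel' (hall k)]
    have hyzV : (p : ℚ) • (x : V) = (p : ℚ) • (z : V) := by
      have h1 : ((y x : T) : V) = (((p : ℤ) • z : T) : V) := congrArg _ hyz
      rw [Submodule.coe_smul, ← Int.cast_smul_eq_zsmul ℚ] at h1
      push_cast at h1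
      exact h1
    have hpne : (p : ℚ) ≠ 0 := by exact_mod_cast hp.ne_zero
    have : (x : V) = (z : V) := smul_right_injective V hpne hyzV
    rw [this]; exact z.2
  -- the linear map
  have hGadd : ∀ x x' : Tstar, c (x + x') = c x + c x' := by
    intro x x'
    have : y (x + x') = y x + y x' := by
      apply Subtype.ext
      show (p : ℚ) • ((x : V) + (x' : V)) = (p : ℚ) • (x : V) + (p : ℚ) • (x' : V)
      rw [smul_add]
    rw [hc_def]
    show b.repr (y (x + x')) = b.repr (y x) + b.repr (y x')
    rw [this, map_add]
  have hGsmul : ∀ (n : ℤ) (x : Tstar), c (n • x) = n • c x := by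
    intro n x
    have : y (n • x) = n • y x := by
      apply Subtype.ext
      show (p : ℚ) • (((n • x : Tstar) : V)) = n • ((p : ℚ) • (x : V))
      rw [Submodule.coe_smul, ← Int.cast_smul_eq_zsmul ℚ n, ← Int.cast_smul_eq_zsmul ℚ n,
        smul_comm]
    rw [hc_def]
    show b.repr (y (n • x)) = n • b.repr (y x)
    rw [this, map_smul]
  let G : Tstar →ₗ[ℤ] (Fin m → ZMod p) :=
    { toFun := fun x i => ((c x (i, last) : ℤ) : ZMod p)
      map_add' := by
        intro x x'
        funext i
        show ((c (x + x') (i, last) : ℤ) : ZMod p)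
            = ((c x (i, last) : ℤ) : ZMod p) + ((c x' (i, last) : ℤ) : ZMod p)
        rw [hGadd]
        push_cast [Finsupp.add_apply]
        ring
      map_smul' := by
        intro n x
        funext i
        show ((c (n • x) (i, last) : ℤ) : ZMod p) = n • ((c x (i, last) : ℤ) : ZMod p)
        rw [hGsmul, Finsupp.smul_apply, smul_eq_mul]
        push_cast
        simp }
  have hker : T.comap Tstar.subtype ≤ LinearMap.ker G := by
    intro x hx
    have hxT : (x : V) ∈ T := hx
    have : y x = (p : ℤ) • (⟨(x : V), hxT⟩ : T) := by
      apply Subtype.ext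
      show (p : ℚ) • (x : V) = (p : ℤ) • (x : V)
      rw [← Int.cast_smul_eq_zsmul ℚ]
      norm_num
    simp only [LinearMap.mem_ker]
    funext i
    show ((c x (i, last) : ℤ) : ZMod p) = 0
    rw [hc_def]
    show ((b.repr (y x) (i, last) : ℤ) : ZMod p) = 0
    rw [this, map_smul]
    push_cast [Finsupp.smul_apply]
    simp
  have hker2 : LinearMap.ker G ≤ T.comap Tstar.subtype := by
    intro x hx
    simp only [LinearMap.mem_ker] at hx
    have : ∀ i : Fin m, ((c x (i, last) : ℤ) : ZMod p) = 0 := fun i => congrFun hx i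
    exact hinT x this
  let Gbar := (T.comap Tstar.subtype).liftQ G hker
  have hGbar_inj : Function.Injective Gbar :=
    LinearMap.ker_eq_bot.mp (Submodule.ker_liftQ_eq_bot _ _ hker hker2)
  have hinj : Function.Injective (Gbar ∘ e.symm) :=
    hGbar_inj.comp e.symm.injective
  have hcard := Fintype.card_le_of_injective _ hinj
  rw [Fintype.card_fun, Fintype.card_fun, ZMod.card, Fintype.card_fin, Fintype.card_fin] at hcard
  exact (Nat.pow_le_pow_iff_right hp.one_lt).mp hcard
end

section
/- With ζ a primitive 7th root of unity, the vector v = (-1+ζ²+ζ⁴-ζ⁵)e₁ + (ζ³-1)f₁ + (ζ-ζ⁵)e₂ + (ζ²-ζ⁵)f₂ + x + (1+ζ⁵)y is an eigenvector of ρ₀ (ℂ-linearly extended) with eigenvalue ζ, and the Gram pairing satisfies (v, v̄) = 7(ζ + ζ⁶). -/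
open Matrix

private lemma vec6_val_five {α : Type*} (a b c d e f : α) : ![a, b, c, d, e, f] 5 = f := rfl

/-- For a primitive 7th root of unity `ζ`, the vector
`v = (-1+ζ²+ζ⁴-ζ⁵)e₁ + (ζ³-1)f₁ + (ζ-ζ⁵)e₂ + (ζ²-ζ⁵)f₂ + x + (1+ζ⁵)y`
is an eigenvector of `ρ₀` with eigenvalue `ζ`, and `(v, v̄) = 7(ζ + ζ⁶)` for the Gram
form of `U ⊕ U ⊕ K₇`. -/
theorem rho0_eigenvector_and_pairing (ζ : ℂ) (hζ : IsPrimitiveRoot ζ 7) :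
    (!![1, 2, 0, 0, 1, 3;
        1, 0, -1, -1, 2, -1;
        1, 1, 1, 1, -1, 4;
        1, 2, 1, 0, 1, 3;
        0, 0, 1, 0, -1, 1;
        -1, -1, 0, 0, -1, -2] : Matrix (Fin 6) (Fin 6) ℂ).mulVec
      ![-1 + ζ ^ 2 + ζ ^ 4 - ζ ^ 5, ζ ^ 3 - 1, ζ - ζ ^ 5, ζ ^ 2 - ζ ^ 5, 1, 1 + ζ ^ 5] =
      ζ • ![-1 + ζ ^ 2 + ζ ^ 4 - ζ ^ 5, ζ ^ 3 - 1, ζ - ζ ^ 5, ζ ^ 2 - ζ ^ 5, 1,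
        1 + ζ ^ 5] ∧
    ![-1 + ζ ^ 2 + ζ ^ 4 - ζ ^ 5, ζ ^ 3 - 1, ζ - ζ ^ 5, ζ ^ 2 - ζ ^ 5, 1, 1 + ζ ^ 5] ⬝ᵥ
      (!![0, 1, 0, 0, 0, 0;
          1, 0, 0, 0, 0, 0;
          0, 0, 0, 1, 0, 0;
          0, 0, 1, 0, 0, 0;
          0, 0, 0, 0, -2, 1;
          0, 0, 0, 0, 1, -4] : Matrix (Fin 6) (Fin 6) ℂ).mulVec
        ![-1 + ζ ^ 5 + ζ ^ 3 - ζ ^ 2, ζ ^ 4 - 1, ζ ^ 6 - ζ ^ 2, ζ ^ 5 - ζ ^ 2, 1,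
          1 + ζ ^ 2] = 7 * (ζ + ζ ^ 6) := by
  have hs : 1 + ζ + ζ ^ 2 + ζ ^ 3 + ζ ^ 4 + ζ ^ 5 + ζ ^ 6 = 0 := by
    have := hζ.geom_sum_eq_zero (by norm_num)
    simpa [Finset.sum_range_succ] using this
  constructor
  · funext i
    fin_cases i
    · simp [Matrix.cons_mulVec, Matrix.cons_dotProduct, Matrix.empty_mulVec,
        Matrix.dotProduct_of_isEmpty, Matrix.smul_cons, Matrix.smul_empty, smul_eq_mul,
        vec6_val_five]
      linear_combination hs
    · simp [Matrix.cons_mulVec, Matrix.cons_dotProduct, Matrix.empty_mulVec,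
        Matrix.dotProduct_of_isEmpty, Matrix.smul_cons, Matrix.smul_empty, smul_eq_mul,
        vec6_val_five]
      ring
    · simp [Matrix.cons_mulVec, Matrix.cons_dotProduct, Matrix.empty_mulVec,
        Matrix.dotProduct_of_isEmpty, Matrix.smul_cons, Matrix.smul_empty, smul_eq_mul,
        vec6_val_five]
      linear_combination hs
    · simp [Matrix.cons_mulVec, Matrix.cons_dotProduct, Matrix.empty_mulVec,
        Matrix.dotProduct_of_isEmpty, Matrix.smul_cons, Matrix.smul_empty, smul_eq_mul,
        vec6_val_five]
      linear_combination hs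
    · simp [Matrix.cons_mulVec, Matrix.cons_dotProduct, Matrix.empty_mulVec,
        Matrix.dotProduct_of_isEmpty, Matrix.smul_cons, Matrix.smul_empty, smul_eq_mul,
        vec6_val_five]
    · simp [Matrix.cons_mulVec, Matrix.cons_dotProduct, Matrix.empty_mulVec,
        Matrix.dotProduct_of_isEmpty, Matrix.smul_cons, Matrix.smul_empty, smul_eq_mul,
        vec6_val_five]
      linear_combination -hs
  · simp [Matrix.cons_mulVec, Matrix.cons_dotProduct, Matrix.empty_mulVec,
      Matrix.dotProduct_of_isEmpty, vec6_val_five, Matrix.head_cons, Matrix.tail_cons,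
      Matrix.vecHead, Matrix.vecTail, Function.comp]
    linear_combination (-2 - 5 * ζ + 4 * ζ ^ 2 - ζ ^ 5) * hs
end
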